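/- arXiv:2003.05584 — 2 statements merged into one kernel-verified Lean document; each statement's English description precedes it below -/
import Mathlib

section
/- Let E(n) be as follows: E(1) = 1, and for n ≥ 2, E(n) is the number of triples on the (1,0)-Euclid tree with maximum coordinate n. Then for every positive integer n, E(n) = Σ_{d | n} μ(d)·(⌊n/(2d)⌋ + 1), where μ is the Möbius function. -/
/-- The maximum coordinate of a triple. -/
def tmax (T : ℕ × ℕ × ℕ) : ℕ := max T.1 (max T.2.1 T.2.2)

/-- First branching operation Γ_{β,1}(τ₁,τ₂,τ₃) = (τ₂, τ₃, τ₂+τ₃+β). -/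
def Gamma1 (β : ℕ) (T : ℕ × ℕ × ℕ) : ℕ × ℕ × ℕ := (T.2.1, T.2.2, T.2.1 + T.2.2 + β)

/-- Second branching operation Γ_{β,2}(τ₁,τ₂,τ₃) = (τ₁, τ₃, τ₁+τ₃+β). -/
def Gamma2 (β : ℕ) (T : ℕ × ℕ × ℕ) : ℕ × ℕ × ℕ := (T.1, T.2.2, T.1 + T.2.2 + β)

/-- The j-th layer of the (α,β)-Euclid tree. -/
def layer (α β : ℕ) : ℕ → Set (ℕ × ℕ × ℕ)
  | 0 => {(α, α, 2 * α + β)}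
  | j + 1 => {T | ∃ P ∈ layer α β j, T = Gamma1 β P ∨ T = Gamma2 β P}

/-- The (α,β)-Euclid tree: all triples on some layer. -/
def EuclidTree (α β : ℕ) : Set (ℕ × ℕ × ℕ) := ⋃ j, layer α β j

/-- E(1) = 1 and, for n ≥ 2, E(n) is the number of triples on the (1,0)-Euclid tree
with maximum coordinate n. -/
noncomputable def E (n : ℕ) : ℕ :=
  if n = 1 then 1 else {T ∈ EuclidTree 1 0 | tmax T = n}.ncard

lemma layer_mem {j : ℕ} {T : ℕ × ℕ × ℕ} (h : T ∈ layer 1 0 j) :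
    ∃ a b : ℕ, 1 ≤ a ∧ a ≤ b ∧ Nat.gcd a b = 1 ∧ T = (a, b, a + b) := by
  induction j generalizing T with
  | zero =>
    simp only [layer, Set.mem_singleton_iff] at h
    exact ⟨1, 1, le_refl 1, le_refl 1, Nat.gcd_self 1, by simp [h]⟩
  | succ j ih =>
    obtain ⟨P, hP, hT⟩ := h
    obtain ⟨a, b, ha, hab, hg, rfl⟩ := ih hP
    rcases hT with rfl | rfl
    · refine ⟨b, a + b, ha.trans hab, Nat.le_add_left b a, ?_, ?_⟩
      · rw [Nat.gcd_add_self_right b a, Nat.gcd_comm]; exact hg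
      · simp [Gamma1]
    · refine ⟨a, a + b, ha, Nat.le_add_right a b, ?_, ?_⟩
      · rw [add_comm a b, Nat.gcd_add_self_right a b]; exact hg
      · simp [Gamma2]

lemma tree_step {P T : ℕ × ℕ × ℕ} (hP : P ∈ EuclidTree 1 0)
    (h : T = Gamma1 0 P ∨ T = Gamma2 0 P) : T ∈ EuclidTree 1 0 := by
  obtain ⟨j, hj⟩ := Set.mem_iUnion.1 hP
  exact Set.mem_iUnion.2 ⟨j + 1, ⟨P, hj, h⟩⟩

lemma mem_tree (b : ℕ) : ∀ a : ℕ, 1 ≤ a → a ≤ b → Nat.gcd a b = 1 →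
    (a, b, a + b) ∈ EuclidTree 1 0 := by
  induction b using Nat.strong_induction_on with
  | _ b ih =>
    intro a ha hab hg
    rcases eq_or_lt_of_le hab with rfl | hlt
    · have h1 : a = 1 := by simpa using hg
      subst h1
      exact Set.mem_iUnion.2 ⟨0, by simp [layer]⟩
    · have hb' : 1 ≤ b - a := by omega
      have hba : (b - a) + a = b := by omega
      have hg' : Nat.gcd a (b - a) = 1 := by
        rw [Nat.gcd_sub_self_right hlt.le]; exact hg
      rcases le_or_gt a (b - a) with hle | hgt
      · have hP := ih (b - a) (by omega) a ha hle hg'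
        refine tree_step hP (Or.inr ?_)
        simp only [Gamma2, Prod.mk.injEq]
        exact ⟨trivial, by omega, by omega⟩
      · have hP := ih a hlt (b - a) hb' hgt.le (by rw [Nat.gcd_comm]; exact hg')
        refine tree_step hP (Or.inl ?_)
        simp only [Gamma1, Prod.mk.injEq]
        exact ⟨trivial, by omega, by omega⟩

lemma tree_iff {T : ℕ × ℕ × ℕ} : T ∈ EuclidTree 1 0 ↔
    ∃ a b : ℕ, 1 ≤ a ∧ a ≤ b ∧ Nat.gcd a b = 1 ∧ T = (a, b, a + b) := by
  constructor
  · intro h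
    obtain ⟨j, hj⟩ := Set.mem_iUnion.1 h
    exact layer_mem hj
  · rintro ⟨a, b, ha, hab, hg, rfl⟩
    exact mem_tree b a ha hab hg

open ArithmeticFunction ArithmeticFunction.Moebius in
lemma sum_moebius_divisors (k : ℕ) :
    (∑ e ∈ k.divisors, μ e) = if k = 1 then 1 else 0 := by
  have h := congrArg (fun f : ArithmeticFunction ℤ => f k) moebius_mul_coe_zeta
  simp only [coe_mul_zeta_apply, one_apply] at h
  exact h

open ArithmeticFunction ArithmeticFunction.Moebius in
lemma count_coprime (m n : ℕ) (hn : n ≠ 0) :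
    ((((Finset.Icc 1 m).filter fun a => Nat.gcd a n = 1).card : ℤ)) =
      ∑ d ∈ n.divisors, μ d * (m / d : ℕ) := by
  have hcard : (((Finset.Icc 1 m).filter fun a => Nat.gcd a n = 1).card : ℤ) =
      ∑ a ∈ Finset.Icc 1 m, if Nat.gcd a n = 1 then (1 : ℤ) else 0 := by
    rw [Finset.card_filter]
    push_cast
    rfl
  rw [hcard]
  have key : ∀ a ∈ Finset.Icc 1 m,
      (if Nat.gcd a n = 1 then (1 : ℤ) else 0) =
        ∑ d ∈ n.divisors, if d ∣ a then (μ d : ℤ) else 0 := by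
    intro a ha
    have ha1 : 1 ≤ a := (Finset.mem_Icc.1 ha).1
    have hgne : Nat.gcd a n ≠ 0 := Nat.gcd_ne_zero_right hn
    have hdiv : n.divisors.filter (· ∣ a) = (Nat.gcd a n).divisors := by
      ext e
      simp only [Finset.mem_filter, Nat.mem_divisors, Nat.dvd_gcd_iff]
      constructor
      · rintro ⟨⟨hen, _⟩, hea⟩; exact ⟨⟨hea, hen⟩, hgne⟩
      · rintro ⟨⟨hea, hen⟩, _⟩; exact ⟨⟨hen, hn⟩, hea⟩
    rw [← Finset.sum_filter, hdiv, sum_moebius_divisors]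
  rw [Finset.sum_congr rfl key, Finset.sum_comm]
  refine Finset.sum_congr rfl fun d hd => ?_
  rw [← Finset.sum_filter, Finset.sum_const, nsmul_eq_mul]
  have : (Finset.Icc 1 m).filter (d ∣ ·) = (Finset.Ioc 0 m).filter (d ∣ ·) := by
    rw [← Finset.Icc_add_one_left_eq_Ioc, zero_add]
  rw [this, Nat.Ioc_filter_dvd_card_eq_div]
  ring

lemma tmax_triple (a b : ℕ) : tmax (a, b, a + b) = a + b := by
  simp only [tmax]; omega

open ArithmeticFunction ArithmeticFunction.Moebius in
/-- E(n) = Σ_{d ∣ n} μ(d)·(⌊n/(2d)⌋ + 1) for every positive integer n. -/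
theorem E_eq_moebius_sum (n : ℕ) (hn : 1 ≤ n) :
    (E n : ℤ) = ∑ d ∈ n.divisors, μ d * ((n / (2 * d) : ℕ) + 1) := by
  rcases eq_or_lt_of_le hn with rfl | hn2
  · simp [E, Nat.divisors_one]
  -- n ≥ 2
  have hne1 : n ≠ 1 := by omega
  have hn0 : n ≠ 0 := by omega
  -- the set of triples with max n is the image of a finset
  have hset : {T ∈ EuclidTree 1 0 | tmax T = n} =
      ↑(((Finset.Icc 1 (n / 2)).filter fun a => Nat.gcd a n = 1).image
        fun a => ((a, n - a, n) : ℕ × ℕ × ℕ)) := by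
    ext T
    simp only [Set.mem_setOf_eq, Finset.coe_image, Set.mem_image, Finset.mem_coe,
      Finset.mem_filter, Finset.mem_Icc]
    constructor
    · rintro ⟨hT, hmax⟩
      obtain ⟨a, b, ha, hab, hg, rfl⟩ := tree_iff.1 hT
      rw [tmax_triple] at hmax
      have h2a : 2 * a ≤ n := by omega
      refine ⟨a, ⟨⟨ha, ?_⟩, ?_⟩, ?_⟩
      · omega
      · have : Nat.gcd a n = Nat.gcd a b := by
          rw [← hmax, add_comm a b, Nat.gcd_add_self_right]
        rw [this]; exact hg
      · simp only [Prod.mk.injEq]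
        exact ⟨trivial, by omega, by omega⟩
    · rintro ⟨a, ⟨⟨ha, ham⟩, hg⟩, rfl⟩
      have h2a : 2 * a ≤ n := by
        have := Nat.div_mul_le_self n 2
        omega
      have hab : a ≤ n - a := by omega
      have hg' : Nat.gcd a (n - a) = 1 := by
        rw [Nat.gcd_sub_self_right (by omega)]; exact hg
      have hsum : a + (n - a) = n := by omega
      constructor
      · have := mem_tree (n - a) a ha hab hg'
        rw [hsum] at this; exact this
      · have := tmax_triple a (n - a)
        rw [hsum] at this; exact this
  have hinj : Function.Injective (fun a : ℕ => ((a, n - a, n) : ℕ × ℕ × ℕ)) := by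
    intro x y h
    simpa using congrArg Prod.fst h
  have hE : (E n : ℤ) =
      (((Finset.Icc 1 (n / 2)).filter fun a => Nat.gcd a n = 1).card : ℤ) := by
    rw [E, if_neg hne1, hset, Set.ncard_coe_finset,
      Finset.card_image_of_injective _ hinj]
  rw [hE, count_coprime _ n hn0]
  have hdd : ∀ d ∈ n.divisors, (((n / 2) / d : ℕ) : ℤ) = ((n / (2 * d) : ℕ) : ℤ) := by
    intro d _
    rw [Nat.div_div_eq_div_mul]
  have hzero : (∑ d ∈ n.divisors, (μ d : ℤ)) = 0 := by
    rw [sum_moebius_divisors, if_neg hne1]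
  calc (∑ d ∈ n.divisors, (μ d : ℤ) * ((n / 2) / d : ℕ))
      = ∑ d ∈ n.divisors, ((μ d : ℤ) * ((n / (2 * d) : ℕ) : ℤ)) := by
        refine Finset.sum_congr rfl fun d hd => by rw [hdd d hd]
    _ = (∑ d ∈ n.divisors, (μ d : ℤ) * (((n / (2 * d) : ℕ) : ℤ) + 1))
          - ∑ d ∈ n.divisors, (μ d : ℤ) := by
        rw [← Finset.sum_sub_distrib]
        refine Finset.sum_congr rfl fun d _ => by ring
    _ = ∑ d ∈ n.divisors, (μ d : ℤ) * (((n / (2 * d) : ℕ) : ℤ) + 1) := by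
        rw [hzero, sub_zero]
end

section
/- Let β ≥ 0 and n ≥ 1 be integers, let E be the counting function of maxima on the (1,0)-Euclid tree (E(1)=1, E(d) = number of triples on the (1,0)-Euclid tree with max d for d ≥ 2), and let C_β(n) be 1 plus the number of triples T on some (α,β)-Euclid tree (over all α ≥ 1) with max T = n. Then C_β(n) = Σ_{d | (n+β), βd < n+β} E(d). -/
/-- C_β(n): 1 plus the number of triples on some (α,β)-Euclid tree (α ≥ 1) whose
maximum coordinate is n. -/
noncomputable def CC (β n : ℕ) : ℕ :=
  {T : ℕ × ℕ × ℕ | (∃ α, 1 ≤ α ∧ T ∈ EuclidTree α β) ∧ tmax T = n}.ncard + 1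

lemma layer_inv (α β : ℕ) (hα : 1 ≤ α) :
    ∀ j, ∀ T ∈ layer α β j, 1 ≤ T.1 ∧ T.1 ≤ T.2.1 ∧ T.2.1 ≤ T.2.2 := by
  intro j
  induction j with
  | zero => intro T hT; simp only [layer, Set.mem_singleton_iff] at hT; subst hT; simp; omega
  | succ j ih =>
    rintro T ⟨P, hP, h | h⟩ <;> subst h <;>
      obtain ⟨h1, h2, h3⟩ := ih P hP <;> simp [Gamma1, Gamma2] <;> omega

lemma tree_inv (α β : ℕ) (hα : 1 ≤ α) {T : ℕ × ℕ × ℕ} (hT : T ∈ EuclidTree α β) :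
    1 ≤ T.1 ∧ T.1 ≤ T.2.1 ∧ T.2.1 ≤ T.2.2 := by
  obtain ⟨j, hj⟩ := Set.mem_iUnion.mp hT
  exact layer_inv α β hα j T hj

lemma tmax_eq (α β : ℕ) (hα : 1 ≤ α) {T : ℕ × ℕ × ℕ} (hT : T ∈ EuclidTree α β) :
    tmax T = T.2.2 := by
  obtain ⟨h1, h2, h3⟩ := tree_inv α β hα hT
  simp [tmax]; omega

lemma layer10_inv : ∀ j, ∀ T ∈ layer 1 0 j, Nat.Coprime T.1 T.2.1 ∧ T.2.2 = T.1 + T.2.1 := by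
  intro j
  induction j with
  | zero => intro T hT; simp only [layer, Set.mem_singleton_iff] at hT; subst hT; exact ⟨Nat.coprime_one_left 1, rfl⟩
  | succ j ih =>
    rintro T ⟨P, hP, h | h⟩ <;> subst h <;> obtain ⟨h1, h2⟩ := ih P hP <;>
      simp only [Gamma1, Gamma2] <;> constructor
    · rw [h2]; exact (Nat.coprime_add_self_right).mpr h1.symm
    · omega
    · rw [h2]; rw [Nat.add_comm]; exact (Nat.coprime_add_self_right).mpr h1
    · omega

def G (k β : ℕ) (S : ℕ × ℕ × ℕ) : ℕ × ℕ × ℕ := (k*S.1 - β, k*S.2.1 - β, k*S.2.2 - β)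

lemma G_Gamma1 (β k : ℕ) (hk : β ≤ k) (S : ℕ × ℕ × ℕ) (h2 : 1 ≤ S.2.1) (h3 : 1 ≤ S.2.2) :
    Gamma1 β (G k β S) = G k β (Gamma1 0 S) := by
  have e2 : β ≤ k * S.2.1 := hk.trans (Nat.le_mul_of_pos_right k h2)
  have e3 : β ≤ k * S.2.2 := hk.trans (Nat.le_mul_of_pos_right k h3)
  simp only [Gamma1, G, Prod.mk.injEq, Nat.mul_add, Nat.mul_zero, Nat.add_zero]
  exact ⟨trivial, trivial, by omega⟩

lemma G_Gamma2 (β k : ℕ) (hk : β ≤ k) (S : ℕ × ℕ × ℕ) (h1 : 1 ≤ S.1) (h3 : 1 ≤ S.2.2) :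
    Gamma2 β (G k β S) = G k β (Gamma2 0 S) := by
  have e1 : β ≤ k * S.1 := hk.trans (Nat.le_mul_of_pos_right k h1)
  have e3 : β ≤ k * S.2.2 := hk.trans (Nat.le_mul_of_pos_right k h3)
  simp only [Gamma2, G, Prod.mk.injEq, Nat.mul_add, Nat.mul_zero, Nat.add_zero]
  exact ⟨trivial, trivial, by omega⟩

lemma layer_scale (α β : ℕ) (hα : 1 ≤ α) :
    ∀ j, layer α β j = G (α+β) β '' layer 1 0 j := by
  have hk : β ≤ α + β := by omega
  intro j
  induction j with
  | zero =>
    simp only [layer, Set.image_singleton]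
    congr 1
    simp only [G, Prod.mk.injEq]
    refine ⟨by omega, by omega, by omega⟩
  | succ j ih =>
    ext T
    simp only [layer, Set.mem_setOf_eq, ih, Set.mem_image]
    constructor
    · rintro ⟨P, ⟨S, hS, rfl⟩, h | h⟩
      · obtain ⟨p1, p2, p3⟩ := layer_inv 1 0 le_rfl j S hS
        exact ⟨Gamma1 0 S, ⟨S, hS, Or.inl rfl⟩,
          by rw [h, G_Gamma1 β (α+β) hk S (by omega) (by omega)]⟩
      · obtain ⟨p1, p2, p3⟩ := layer_inv 1 0 le_rfl j S hS
        exact ⟨Gamma2 0 S, ⟨S, hS, Or.inr rfl⟩,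
          by rw [h, G_Gamma2 β (α+β) hk S (by omega) (by omega)]⟩
    · rintro ⟨S', ⟨S, hS, h | h⟩, rfl⟩
      · obtain ⟨p1, p2, p3⟩ := layer_inv 1 0 le_rfl j S hS
        exact ⟨G (α+β) β S, ⟨S, hS, rfl⟩,
          Or.inl (by rw [h, G_Gamma1 β (α+β) hk S (by omega) (by omega)])⟩
      · obtain ⟨p1, p2, p3⟩ := layer_inv 1 0 le_rfl j S hS
        exact ⟨G (α+β) β S, ⟨S, hS, rfl⟩,
          Or.inr (by rw [h, G_Gamma2 β (α+β) hk S (by omega) (by omega)])⟩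

lemma tree_scale (α β : ℕ) (hα : 1 ≤ α) :
    EuclidTree α β = G (α+β) β '' EuclidTree 1 0 := by
  simp only [EuclidTree, Set.image_iUnion]
  exact Set.iUnion_congr (layer_scale α β hα)

lemma tree10_inv {S : ℕ × ℕ × ℕ} (hS : S ∈ EuclidTree 1 0) :
    Nat.Coprime S.1 S.2.1 ∧ S.2.2 = S.1 + S.2.1 := by
  obtain ⟨j, hj⟩ := Set.mem_iUnion.mp hS
  exact layer10_inv j S hj

lemma Bfin (d : ℕ) : {T ∈ EuclidTree 1 0 | tmax T = d}.Finite := by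
  apply Set.Finite.subset ((Set.finite_Iic d).prod ((Set.finite_Iic d).prod (Set.finite_Iic d)))
  rintro ⟨a, b, c⟩ ⟨-, h⟩
  simp only [Set.mem_prod, Set.mem_Iic]
  simp only [tmax] at h
  omega

lemma tmax_G (k β : ℕ) (hk : β < k) {S : ℕ × ℕ × ℕ}
    (h1 : 1 ≤ S.1) (h2 : S.1 ≤ S.2.1) (h3 : S.2.1 ≤ S.2.2) :
    tmax (G k β S) = k * S.2.2 - β := by
  have e1 : k ≤ k * S.1 := Nat.le_mul_of_pos_right k h1
  have m12 : k * S.1 ≤ k * S.2.1 := Nat.mul_le_mul_left k h2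
  have m23 : k * S.2.1 ≤ k * S.2.2 := Nat.mul_le_mul_left k h3
  simp only [tmax, G]
  omega

lemma G_injOn (k β : ℕ) (hk : β < k) :
    Set.InjOn (G k β) {S | 1 ≤ S.1 ∧ 1 ≤ S.2.1 ∧ 1 ≤ S.2.2} := by
  rintro ⟨a, b, c⟩ ⟨ha, hb, hc⟩ ⟨a', b', c'⟩ ⟨ha', hb', hc'⟩ h
  simp only [G, Prod.mk.injEq] at h
  have e1 : k ≤ k * a := Nat.le_mul_of_pos_right k ha
  have e2 : k ≤ k * b := Nat.le_mul_of_pos_right k hb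
  have e3 : k ≤ k * c := Nat.le_mul_of_pos_right k hc
  have e1' : k ≤ k * a' := Nat.le_mul_of_pos_right k ha'
  have e2' : k ≤ k * b' := Nat.le_mul_of_pos_right k hb'
  have e3' : k ≤ k * c' := Nat.le_mul_of_pos_right k hc'
  have ka : k * a = k * a' := by omega
  have kb : k * b = k * b' := by omega
  have kc : k * c = k * c' := by omega
  have hk0 : 0 < k := by omega
  exact Prod.ext (Nat.eq_of_mul_eq_mul_left hk0 ka)
    (Prod.ext (Nat.eq_of_mul_eq_mul_left hk0 kb) (Nat.eq_of_mul_eq_mul_left hk0 kc))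

lemma ncard_biUnion {X : Type*} (s : Finset ℕ) (F : ℕ → Set X)
    (hfin : ∀ d ∈ s, (F d).Finite)
    (hdisj : ∀ d ∈ s, ∀ e ∈ s, d ≠ e → Disjoint (F d) (F e)) :
    (⋃ d ∈ s, F d).ncard = ∑ d ∈ s, (F d).ncard := by
  classical
  induction s using Finset.induction_on with
  | empty => simp
  | @insert a s ha ih =>
    rw [Finset.set_biUnion_insert, Finset.sum_insert ha]
    have hfin' : ∀ d ∈ s, (F d).Finite := fun d hd => hfin d (Finset.mem_insert_of_mem hd)
    have hUfin : (⋃ d ∈ s, F d).Finite := Set.Finite.biUnion s.finite_toSet hfin'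
    rw [Set.ncard_union_eq ?_ (hfin a (Finset.mem_insert_self a s)) hUfin,
      ih hfin' (fun d hd e he hne =>
        hdisj d (Finset.mem_insert_of_mem hd) e (Finset.mem_insert_of_mem he) hne)]
    simp only [Set.disjoint_iUnion_right]
    intro i hi
    exact hdisj a (Finset.mem_insert_self a s) i (Finset.mem_insert_of_mem hi)
      (by rintro rfl; exact ha hi)

lemma main_eq (β n : ℕ) (hn : 1 ≤ n) :
    {T : ℕ × ℕ × ℕ | (∃ α, 1 ≤ α ∧ T ∈ EuclidTree α β) ∧ tmax T = n} =
    ⋃ d ∈ ((n + β).divisors.filter (fun d => β * d < n + β)).filter (fun d => 2 ≤ d),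
      G ((n + β) / d) β '' {S ∈ EuclidTree 1 0 | tmax S = d} := by
  ext T
  simp only [Set.mem_setOf_eq, Set.mem_iUnion, Finset.mem_filter, Nat.mem_divisors,
    Set.mem_image, exists_prop]
  constructor
  · rintro ⟨⟨α, hα, hT⟩, hmax⟩
    rw [tree_scale α β hα] at hT
    obtain ⟨S, hS, rfl⟩ := hT
    obtain ⟨s1, s12, s23⟩ := tree_inv 1 0 le_rfl hS
    obtain ⟨hcop, hsum⟩ := tree10_inv hS
    set k := α + β with hkdef
    have hk : β < k := by omega
    have hd2 : 2 ≤ S.2.2 := by omega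
    have htm : tmax (G k β S) = k * S.2.2 - β := tmax_G k β hk s1 s12 s23
    have hkk : k ≤ k * S.2.2 := Nat.le_mul_of_pos_right k (by omega)
    have hmul : k * S.2.2 = n + β := by omega
    have hdvd : S.2.2 ∣ n + β := Dvd.intro_left k hmul
    have hdiv : (n + β) / S.2.2 = k := by
      rw [← hmul]; exact Nat.mul_div_cancel k (by omega)
    refine ⟨S.2.2, ⟨⟨⟨hdvd, by omega⟩, ?_⟩, hd2⟩, S, ⟨hS, ?_⟩, by rw [hdiv]⟩
    · have := (Nat.mul_lt_mul_right (show 0 < S.2.2 by omega)).mpr hk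
      omega
    · have := tmax_eq 1 0 le_rfl hS
      simp only [tmax] at this ⊢
      omega
  · rintro ⟨d, ⟨⟨⟨hdvd, hne⟩, hβd⟩, hd2⟩, S, ⟨hS, hSmax⟩, rfl⟩
    set k := (n + β) / d with hkdef
    have hkd : k * d = n + β := Nat.div_mul_cancel hdvd
    have hk : β < k := by
      have : β * d < k * d := by omega
      exact Nat.lt_of_mul_lt_mul_right this
    obtain ⟨s1, s12, s23⟩ := tree_inv 1 0 le_rfl hS
    have hS22 : S.2.2 = d := by
      have := tmax_eq 1 0 le_rfl hS
      omega
    constructor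
    · refine ⟨k - β, by omega, ?_⟩
      rw [tree_scale (k - β) β (by omega), show k - β + β = k by omega]
      exact ⟨S, hS, rfl⟩
    · rw [tmax_G k β hk s1 s12 s23, hS22]
      omega

/-- C_β(n) = Σ_{d ∣ (n+β), βd < n+β} E(d) for β ≥ 0 and n ≥ 1. -/
theorem C_beta_eq_sum_E (β n : ℕ) (hn : 1 ≤ n) :
    CC β n = ∑ d ∈ (n + β).divisors.filter (fun d => β * d < n + β), E d := by
  classical
  set D := (n + β).divisors.filter (fun d => β * d < n + β) with hD
  set D₂ := D.filter (fun d => 2 ≤ d) with hD₂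
  have hmem : ∀ d ∈ D₂, d ∣ n + β ∧ β * d < n + β ∧ 2 ≤ d := by
    intro d hd
    rw [hD₂, Finset.mem_filter, hD, Finset.mem_filter, Nat.mem_divisors] at hd
    exact ⟨hd.1.1.1, hd.1.2, hd.2⟩
  have hkfacts : ∀ d ∈ D₂, ((n + β) / d) * d = n + β ∧ β < (n + β) / d := by
    intro d hd
    obtain ⟨hdvd, hβd, hd2⟩ := hmem d hd
    have hkd : ((n + β) / d) * d = n + β := Nat.div_mul_cancel hdvd
    refine ⟨hkd, ?_⟩
    by_contra h
    push_neg at h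
    have : ((n + β) / d) * d ≤ β * d := Nat.mul_le_mul_right d h
    omega
  have hfin : ∀ d ∈ D₂, (G ((n + β) / d) β '' {S ∈ EuclidTree 1 0 | tmax S = d}).Finite :=
    fun d _ => (Bfin d).image _
  have hdisj : ∀ d ∈ D₂, ∀ e ∈ D₂, d ≠ e →
      Disjoint (G ((n + β) / d) β '' {S ∈ EuclidTree 1 0 | tmax S = d})
        (G ((n + β) / e) β '' {S ∈ EuclidTree 1 0 | tmax S = e}) := by
    intro d hd e he hne
    obtain ⟨hkd, hβkd⟩ := hkfacts d hd
    obtain ⟨hke, hβke⟩ := hkfacts e he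
    rw [Set.disjoint_left]
    rintro T ⟨S, ⟨hS, hSm⟩, rfl⟩ ⟨S', ⟨hS', hS'm⟩, heq⟩
    obtain ⟨s1, s12, s23⟩ := tree_inv 1 0 le_rfl hS
    obtain ⟨s1', s12', s23'⟩ := tree_inv 1 0 le_rfl hS'
    obtain ⟨hcop, -⟩ := tree10_inv hS
    obtain ⟨hcop', -⟩ := tree10_inv hS'
    set kd := (n + β) / d
    set ke := (n + β) / e
    have e1 : kd ≤ kd * S.1 := Nat.le_mul_of_pos_right kd (by omega)
    have e2 : kd ≤ kd * S.2.1 := Nat.le_mul_of_pos_right kd (by omega)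
    have e1' : ke ≤ ke * S'.1 := Nat.le_mul_of_pos_right ke (by omega)
    have e2' : ke ≤ ke * S'.2.1 := Nat.le_mul_of_pos_right ke (by omega)
    have h1 := congrArg Prod.fst heq
    have h2 := congrArg (fun T : ℕ × ℕ × ℕ => T.2.1) heq
    simp only [G] at h1 h2
    have g1 : ke * S'.1 = kd * S.1 := by omega
    have g2 : ke * S'.2.1 = kd * S.2.1 := by omega
    have c1 : Nat.gcd S.1 S.2.1 = 1 := hcop
    have c2 : Nat.gcd S'.1 S'.2.1 = 1 := hcop'
    have h3 : Nat.gcd (kd * S.1) (kd * S.2.1) = kd := by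
      rw [Nat.gcd_mul_left, c1, Nat.mul_one]
    have h4 : Nat.gcd (ke * S'.1) (ke * S'.2.1) = ke := by
      rw [Nat.gcd_mul_left, c2, Nat.mul_one]
    rw [g1, g2, h3] at h4
    have hde : kd * d = kd * e := by rw [hkd, h4, hke]
    exact hne (Nat.eq_of_mul_eq_mul_left (by omega) hde)
  have hcard : {T : ℕ × ℕ × ℕ | (∃ α, 1 ≤ α ∧ T ∈ EuclidTree α β) ∧ tmax T = n}.ncard
      = ∑ d ∈ D₂, ({S ∈ EuclidTree 1 0 | tmax S = d}).ncard := by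
    rw [main_eq β n hn, ← hD, ← hD₂, ncard_biUnion D₂ _ hfin hdisj]
    refine Finset.sum_congr rfl fun d hd => ?_
    refine Set.ncard_image_of_injOn ((G_injOn _ β (hkfacts d hd).2).mono ?_)
    rintro S ⟨hS, -⟩
    have h := tree_inv 1 0 le_rfl hS
    simp only [Set.mem_setOf_eq]
    omega
  have hfilter : D.filter (fun d => ¬ 2 ≤ d) = {1} := by
    ext d
    simp only [hD, Finset.mem_filter, Nat.mem_divisors, Finset.mem_singleton, not_le]
    constructor
    · rintro ⟨⟨⟨hdvd, -⟩, -⟩, hlt⟩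
      have := Nat.pos_of_dvd_of_pos hdvd (by omega)
      omega
    · rintro rfl
      exact ⟨⟨⟨one_dvd _, by omega⟩, by omega⟩, by omega⟩
  have hsum : ∑ d ∈ D, E d = (∑ d ∈ D₂, E d) + 1 := by
    rw [← Finset.sum_filter_add_sum_filter_not D (fun d => 2 ≤ d) E, hfilter,
      Finset.sum_singleton, ← hD₂]
    simp [E]
  rw [CC, hcard, hsum]
  congr 1
  refine Finset.sum_congr rfl fun d hd => ?_
  have : d ≠ 1 := by
    have := (hmem d hd).2.2; omega
  simp [E, this]
end
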